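/- In the lattice L with basis C, F, E_1, ..., E_7 as above, the classes D = C + aF - Σ b_n E_n with a ≥ 0, b_n ∈ {0,1}, satisfying Σ b_n = 2a + 1 and D·C_i ≥ 0 for all eight classes C_1, ..., C_8 (from the previous statement) are exactly the eight classes: C - E_7; C + F - E_1 - E_3 - E_6; C + F - E_1 - E_4 - E_5; C + F - E_2 - E_3 - E_5; C + F - E_2 - E_4 - E_6; C + 2F - E_1 - E_2 - E_3 - E_4 - E_7; C + 2F - E_1 - E_2 - E_5 - E_6 - E_7; C + 2F - E_3 - E_4 - E_5 - E_6 - E_7. Moreover any two distinct classes among these eight have pairwise intersection number 1. -/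

import Mathlib

/-- The geometric Picard lattice of a standard rational conic bundle of degree 1:
the free abelian group with basis `C, F, E₁, …, E₇`, realized as `Fin 9 → ℤ`
(coordinate 0 for `C`, coordinate 1 for `F`, coordinates 2–8 for `E₁,…,E₇`). -/
abbrev Pic1 := Fin 9 → ℤ

/-- The index in `Fin 9` of the basis vector `E_n`. -/
def eIdx (n : Fin 7) : Fin 9 := ⟨n.1 + 2, by have := n.isLt; omega⟩

/-- The basis class `C`. -/
def Cv : Pic1 := fun i => if i = 0 then 1 else 0

/-- The basis class `F` (the class of a fiber). -/
def Fv : Pic1 := fun i => if i = 1 then 1 else 0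

/-- The basis class `E_n`. -/
def Ev (n : Fin 7) : Pic1 := fun i => if i = eIdx n then 1 else 0

/-- The intersection pairing: `C·C = F·F = 0`, `C·F = 1`, `E_i·E_i = -1`, and all
other products among basis vectors vanish. -/
def B (v w : Pic1) : ℤ :=
  v 0 * w 1 + v 1 * w 0 - ∑ n : Fin 7, v (eIdx n) * w (eIdx n)

/-- The canonical class `K = -2C - 2F + E₁ + ⋯ + E₇`. -/
def Kv : Pic1 := fun i => -2 * Cv i - 2 * Fv i + ∑ n : Fin 7, Ev n i

/-- The eight classes of the case-(2a) configuration: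
`C₁ = C - E₁ - E₂`, `C₂ = C - E₃ - E₄`, `C₃ = C - E₅ - E₆`,
`C₄ = C + 2F - E₁ - E₂ - E₃ - E₄ - E₅ - E₆`,
`C₅ = C + F - E₁ - E₃ - E₅ - E₇`, `C₆ = C + F - E₁ - E₄ - E₆ - E₇`,
`C₇ = C + F - E₂ - E₃ - E₆ - E₇`, `C₈ = C + F - E₂ - E₄ - E₅ - E₇`. -/
def Cs : Fin 8 → Pic1 :=
  ![Cv - Ev 0 - Ev 1,
    Cv - Ev 2 - Ev 3,
    Cv - Ev 4 - Ev 5,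
    Cv + Fv + Fv - Ev 0 - Ev 1 - Ev 2 - Ev 3 - Ev 4 - Ev 5,
    Cv + Fv - Ev 0 - Ev 2 - Ev 4 - Ev 6,
    Cv + Fv - Ev 0 - Ev 3 - Ev 5 - Ev 6,
    Cv + Fv - Ev 1 - Ev 2 - Ev 5 - Ev 6,
    Cv + Fv - Ev 1 - Ev 3 - Ev 4 - Ev 6]

/-- The eight `(-1)`-section classes compatible with the case-(2a) configuration. -/
def Ds : Fin 8 → Pic1 :=
  ![Cv - Ev 6,
    Cv + Fv - Ev 0 - Ev 2 - Ev 5,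
    Cv + Fv - Ev 0 - Ev 3 - Ev 4,
    Cv + Fv - Ev 1 - Ev 2 - Ev 4,
    Cv + Fv - Ev 1 - Ev 3 - Ev 5,
    Cv + Fv + Fv - Ev 0 - Ev 1 - Ev 2 - Ev 3 - Ev 6,
    Cv + Fv + Fv - Ev 0 - Ev 1 - Ev 4 - Ev 5 - Ev 6,
    Cv + Fv + Fv - Ev 2 - Ev 3 - Ev 4 - Ev 5 - Ev 6]

lemma Ev_apply (n : Fin 7) (i : Fin 9) : Ev n i = if i.1 = n.1 + 2 then 1 else 0 := by
  simp [Ev, eIdx, Fin.ext_iff, Nat.add_comm]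

lemma Dexp (a : ℤ) (b : Fin 7 → ℤ) :
    (fun i => Cv i + a * Fv i - ∑ n : Fin 7, b n * Ev n i)
    = ![1, a, -b 0, -b 1, -b 2, -b 3, -b 4, -b 5, -b 6] := by
  funext i
  fin_cases i <;>
    simp [Cv, Fv, Ev_apply, Fin.sum_univ_seven, Fin.ext_iff, -Fin.coe_ofNat_eq_mod, -Fin.val_eq_zero_iff,
      show ((0:Fin 7):ℕ)=0 from rfl, show ((1:Fin 7):ℕ)=1 from rfl,
      show ((2:Fin 7):ℕ)=2 from rfl, show ((3:Fin 7):ℕ)=3 from rfl,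
      show ((4:Fin 7):ℕ)=4 from rfl, show ((5:Fin 7):ℕ)=5 from rfl,
      show ((6:Fin 7):ℕ)=6 from rfl,
      show ((0:Fin 9):ℕ)=0 from rfl, show ((1:Fin 9):ℕ)=1 from rfl,
      show ((2:Fin 9):ℕ)=2 from rfl, show ((3:Fin 9):ℕ)=3 from rfl,
      show ((4:Fin 9):ℕ)=4 from rfl, show ((5:Fin 9):ℕ)=5 from rfl,
      show ((6:Fin 9):ℕ)=6 from rfl, show ((7:Fin 9):ℕ)=7 from rfl,
      show ((8:Fin 9):ℕ)=8 from rfl, Matrix.cons_val_succ] <;> rfl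

/-- The classes `D = C + aF - Σ bₙEₙ` with `a ≥ 0`, `bₙ ∈ {0,1}`, `Σ bₙ = 2a + 1` and
`D·Cᵢ ≥ 0` for the eight classes `C₁, …, C₈` of the case-(2a) configuration are exactly
the eight classes `D₁, …, D₈` listed above; moreover any two distinct classes among
these eight intersect with intersection number `1`. -/
theorem neg_one_sections_of_case_2a (a : ℤ) (b : Fin 7 → ℤ)
    (ha : 0 ≤ a) (hb : ∀ n, b n = 0 ∨ b n = 1)
    (hsum : ∑ n : Fin 7, b n = 2 * a + 1) :
    ((∀ i : Fin 8, 0 ≤ B (fun i => Cv i + a * Fv i - ∑ n : Fin 7, b n * Ev n i) (Cs i)) ↔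
      ∃ j : Fin 8, (fun i => Cv i + a * Fv i - ∑ n : Fin 7, b n * Ev n i) = Ds j) ∧
    (∀ j k : Fin 8, j ≠ k → B (Ds j) (Ds k) = 1) := by
  refine ⟨?_, by decide⟩
  rw [Dexp]
  rw [Fin.sum_univ_seven] at hsum
  rcases hb 0 with h0 | h0 <;> rcases hb 1 with h1 | h1 <;> rcases hb 2 with h2 | h2 <;>
    rcases hb 3 with h3 | h3 <;> rcases hb 4 with h4 | h4 <;> rcases hb 5 with h5 | h5 <;>
    rcases hb 6 with h6 | h6 <;>
    simp only [h0, h1, h2, h3, h4, h5, h6] at hsum ⊢ <;>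
    first
      | (exfalso; omega)
      | (have ha3 : a ≤ 3 := by omega
         interval_cases a <;> first | (exfalso; omega) | decide)
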